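/- (Strong Nullstellensatz) Let k be an algebraically closed field and a an ideal of k[X_1,...,X_n]. If a polynomial h vanishes on the zero set of a in k^n, then h^m ∈ a for some m ≥ 1. -/

import Mathlib

theorem stmt_19 {k : Type*} [Field k] [IsAlgClosed k] (n : ℕ)
    (a : Ideal (MvPolynomial (Fin n) k)) (h : MvPolynomial (Fin n) k)
    (hvanish : ∀ P : Fin n → k, (∀ f ∈ a, MvPolynomial.eval P f = 0) →
      MvPolynomial.eval P h = 0) :
    ∃ m : ℕ, 1 ≤ m ∧ h ^ m ∈ a := by
  have hrad : h ∈ a.radical := by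
    rw [← MvPolynomial.vanishingIdeal_zeroLocus_eq_radical (K := k) a]
    intro P hP
    simpa using hvanish P fun f hf => by simpa using hP f hf
  obtain ⟨m, hm⟩ := hrad
  rcases Nat.eq_zero_or_pos m with rfl | hpos
  · simp only [pow_zero] at hm
    exact ⟨1, le_refl 1, by simpa using Ideal.mul_mem_left a h hm⟩
  · exact ⟨m, hpos, hm⟩
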